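/- Let L = {(x,y) ∈ ℤ×ℤ : x ≡ y (mod 4) and x + 3y ≡ 0 (mod 8)}. The set N = {(x, y+1) : (x,y) ∈ L} ∪ {(x−1, y−1) : (x,y) ∈ L}, obtained from S3 = L ∪ {(x−1,y) : (x,y) ∈ L} by moving every guard of L one step up and every guard of {(x−1,y) : (x,y) ∈ L} one step down (each move along an edge of T3), satisfies |N[v] ∩ N| = 1 for every vertex v of the infinite hexagonal grid T3; in particular N is again a strongly optimal dominating set of T3. -/

import Mathlib

/-- The infinite hexagonal grid: vertices `ℤ × ℤ`; `(x,y)` is adjacent to `(x,y+1)` and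
`(x,y−1)`, and additionally to `(x+1,y)` when `x+y` is even (equivalently, to `(x−1,y)` when
`x+y` is odd). -/
def T3 : SimpleGraph (ℤ × ℤ) where
  Adj p q :=
    (p.1 = q.1 ∧ (q.2 = p.2 + 1 ∨ p.2 = q.2 + 1)) ∨
    (p.2 = q.2 ∧ ((Even (p.1 + p.2) ∧ q.1 = p.1 + 1) ∨ (Even (q.1 + q.2) ∧ p.1 = q.1 + 1)))
  symm := by
    constructor
    rintro p q (⟨h1, h2 | h2⟩ | ⟨h1, h2 | h2⟩)
    · exact Or.inl ⟨h1.symm, Or.inr h2⟩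
    · exact Or.inl ⟨h1.symm, Or.inl h2⟩
    · exact Or.inr ⟨h1.symm, Or.inr h2⟩
    · exact Or.inr ⟨h1.symm, Or.inl h2⟩
  loopless := by
    constructor
    rintro p (⟨h1, h2 | h2⟩ | ⟨h1, ⟨_, h2⟩ | ⟨_, h2⟩⟩) <;> omega

/-- The lattice `L = {(x,y) : x ≡ y (mod 4), x + 3y ≡ 0 (mod 8)}` (generated by `(2,2)` and
`(3,−1)`). -/
def L : Set (ℤ × ℤ) := {p | Int.ModEq 4 p.1 p.2 ∧ Int.ModEq 8 (p.1 + 3 * p.2) 0}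

/-- `S3 = L ∪ {(x−1, y) : (x,y) ∈ L}`. -/
def S3 : Set (ℤ × ℤ) := L ∪ (fun p : ℤ × ℤ => (p.1 - 1, p.2)) '' L


/-- The configuration obtained from `S3` by moving every guard of `L` one step up and every
guard of `{(x−1,y) : (x,y) ∈ L}` one step down:
`N = {(x, y+1) : (x,y) ∈ L} ∪ {(x−1, y−1) : (x,y) ∈ L}`. -/
def Nconf : Set (ℤ × ℤ) :=
  (fun p : ℤ × ℤ => (p.1, p.2 + 1)) '' L ∪ (fun p : ℤ × ℤ => (p.1 - 1, p.2 - 1)) '' L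

/-- Membership in `L` in pure arithmetic form: since `x+3y ≡ x−y (mod 4)`, the congruence
`x ≡ y (mod 4)` is implied by `x + 3y ≡ 0 (mod 8)`. -/
lemma mem_L_iff (p : ℤ × ℤ) : p ∈ L ↔ (p.1 + 3 * p.2) % 8 = 0 := by
  simp only [L, Set.mem_setOf_eq, Int.ModEq]
  omega

/-- Membership in `Nconf` in pure arithmetic form. -/
lemma mem_Nconf_iff (u : ℤ × ℤ) :
    u ∈ Nconf ↔ (u.1 + 3 * u.2) % 8 = 3 ∨ (u.1 + 3 * u.2) % 8 = 4 := by
  constructor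
  · rintro (⟨⟨x, y⟩, hp, rfl⟩ | ⟨⟨x, y⟩, hp, rfl⟩) <;> rw [mem_L_iff] at hp <;> simp at * <;>
      omega
  · rintro (h | h)
    · exact Or.inl ⟨(u.1, u.2 - 1), (mem_L_iff _).2 (by simp <;> omega), by simp⟩
    · exact Or.inr ⟨(u.1 + 1, u.2 + 1), (mem_L_iff _).2 (by simp <;> omega), by simp⟩

/-- Membership in the closed neighborhood of `v` in pure arithmetic form. -/
lemma mem_closed_iff (v u : ℤ × ℤ) :
    u ∈ insert v (T3.neighborSet v) ↔
      (u.1 = v.1 ∧ (u.2 = v.2 ∨ u.2 = v.2 + 1 ∨ v.2 = u.2 + 1)) ∨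
      (u.2 = v.2 ∧ (((v.1 + v.2) % 2 = 0 ∧ u.1 = v.1 + 1) ∨
        ((u.1 + u.2) % 2 = 0 ∧ v.1 = u.1 + 1))) := by
  simp only [Set.mem_insert_iff, SimpleGraph.mem_neighborSet, T3, Prod.ext_iff, Int.even_iff]
  omega

/-- Every vertex has exactly one guard of `Nconf` in its closed neighborhood. -/
lemma exists_unique_guard (v : ℤ × ℤ) :
    ∃! u : ℤ × ℤ, u ∈ Nconf ∧ u ∈ insert v (T3.neighborSet v) := by
  obtain ⟨a, b⟩ := v
  simp only [mem_Nconf_iff, mem_closed_iff]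
  have H : (a + 3 * b) % 8 = 3 ∨ (a + 3 * b) % 8 = 4 ∨
      (a + 3 * b) % 8 = 0 ∨ (a + 3 * b) % 8 = 1 ∨
      (a + 3 * b) % 8 = 6 ∨ (a + 3 * b) % 8 = 7 ∨
      ((a + 3 * b) % 8 = 2 ∧ (a + b) % 2 = 0) ∨
      ((a + 3 * b) % 8 = 5 ∧ (a + b) % 2 = 1) := by omega
  rcases H with h | h | h | h | h | h | ⟨h, hp⟩ | ⟨h, hp⟩
  · exact ⟨(a, b), ⟨by simp <;> omega, by simp⟩,
      fun u ⟨h1, h2⟩ => by simp only [Prod.ext_iff] at *; omega⟩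
  · exact ⟨(a, b), ⟨by simp <;> omega, by simp⟩,
      fun u ⟨h1, h2⟩ => by simp only [Prod.ext_iff] at *; omega⟩
  · exact ⟨(a, b + 1), ⟨by simp <;> omega, by simp⟩,
      fun u ⟨h1, h2⟩ => by simp only [Prod.ext_iff] at *; omega⟩
  · exact ⟨(a, b + 1), ⟨by simp <;> omega, by simp⟩,
      fun u ⟨h1, h2⟩ => by simp only [Prod.ext_iff] at *; omega⟩
  · exact ⟨(a, b - 1), ⟨by simp <;> omega, by simp <;> omega⟩,
      fun u ⟨h1, h2⟩ => by simp only [Prod.ext_iff] at *; omega⟩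
  · exact ⟨(a, b - 1), ⟨by simp <;> omega, by simp <;> omega⟩,
      fun u ⟨h1, h2⟩ => by simp only [Prod.ext_iff] at *; omega⟩
  · exact ⟨(a + 1, b), ⟨by simp <;> omega, by simp <;> omega⟩,
      fun u ⟨h1, h2⟩ => by simp only [Prod.ext_iff] at *; omega⟩
  · exact ⟨(a - 1, b), ⟨by simp <;> omega, by simp <;> omega⟩,
      fun u ⟨h1, h2⟩ => by simp only [Prod.ext_iff] at *; omega⟩

/-- each of the two moves producing `Nconf` from `S3` is along an edge of `T3`,
and `Nconf` satisfies `|N[v] ∩ Nconf| = 1` for every vertex `v`; in particular `Nconf` is again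
a strongly optimal dominating set of `T3`. -/
theorem stmt_10 :
    (∀ p ∈ L, T3.Adj p (p.1, p.2 + 1) ∧ T3.Adj (p.1 - 1, p.2) (p.1 - 1, p.2 - 1)) ∧
    (∀ v : ℤ × ℤ, ∃! u : ℤ × ℤ, u ∈ Nconf ∧ u ∈ insert v (T3.neighborSet v)) ∧
    (∀ v : ℤ × ℤ, v ∉ Nconf → ∃ u ∈ Nconf, T3.Adj v u) := by
  refine ⟨fun p _ => ⟨Or.inl ⟨rfl, Or.inl rfl⟩, Or.inl ⟨rfl, Or.inr (by ring)⟩⟩,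
    exists_unique_guard, fun v hv => ?_⟩
  obtain ⟨u, ⟨hu1, hu2⟩, -⟩ := exists_unique_guard v
  rcases Set.mem_insert_iff.1 hu2 with rfl | h
  · exact absurd hu1 hv
  · exact ⟨u, hu1, h⟩
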